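/- Let G be a group, N a normal subgroup of G such that G/N is finite cyclic, τ ∈ G an element whose image generates G/N, and d the least positive integer with τ^d ∈ N. Let H be a group, A an abelian group, δ : H → A and ε : G → A group homomorphisms, and let r : N → H be a group homomorphism satisfying δ(r(σ)) = ε(σ) for all σ ∈ N. Then r extends to a group homomorphism R : G → H with δ(R(g)) = ε(g) for all g ∈ G if and only if there exists g ∈ H such that r(τστ⁻¹) = g · r(σ) · g⁻¹ for all σ ∈ N, r(τ^d) = g^d, and δ(g) = ε(τ). -/

import Mathlib

/-- "strong compatibility": let `N ⊴ G` with `G/N` finite cyclic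
generated by the image of `τ`, `d` the least positive integer with `τ^d ∈ N`,
`A` abelian, `δ : H →* A`, `ε : G →* A`, and `r : N →* H` with `δ ∘ r = ε` on `N`.
Then `r` extends to `R : G →* H` with `δ ∘ R = ε` iff there exists `g ∈ H` with
`r (τστ⁻¹) = g * r σ * g⁻¹` on `N`, `r (τ^d) = g^d` and `δ g = ε τ`. -/
theorem extension_criterion_cyclic_with_determinant
    {G H A : Type*} [Group G] [Group H] [CommGroup A]
    (N : Subgroup G) (hN : N.Normal) (τ : G)
    (hgen : ∀ g : G, ∃ n : ℤ, (τ ^ n)⁻¹ * g ∈ N)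
    (d : ℕ) (hd : 0 < d) (hτd : τ ^ d ∈ N)
    (hmin : ∀ k : ℕ, 0 < k → τ ^ k ∈ N → d ≤ k)
    (δ : H →* A) (ε : G →* A)
    (r : N →* H) (hdet : ∀ σ : N, δ (r σ) = ε σ) :
    (∃ R : G →* H, (∀ σ : N, R σ = r σ) ∧ ∀ g : G, δ (R g) = ε g) ↔
      (∃ g : H,
        (∀ σ : N, r ⟨τ * σ * τ⁻¹, hN.conj_mem σ.1 σ.2 τ⟩ = g * r σ * g⁻¹) ∧
        r ⟨τ ^ d, hτd⟩ = g ^ d ∧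
        δ g = ε τ) := by
  constructor
  · rintro ⟨R, hR, hRdet⟩
    refine ⟨R τ, ?_, ?_, ?_⟩
    · intro σ
      have h1 : r ⟨τ * ↑σ * τ⁻¹, hN.conj_mem σ.1 σ.2 τ⟩ = R (τ * ↑σ * τ⁻¹) :=
        (hR _).symm
      rw [h1, map_mul, map_mul, map_inv, hR σ]
    · have := (hR ⟨τ ^ d, hτd⟩).symm
      rw [this]; exact (map_pow R τ d) ▸ rfl
    · exact hRdet τ
  · rintro ⟨g, hconj, hpow, hdg⟩
    -- integer divisibility
    have hdvd : ∀ k : ℤ, τ ^ k ∈ N → (d : ℤ) ∣ k := by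
      intro k hk
      have hd' : (0:ℤ) < d := by exact_mod_cast hd
      have h0 : (0:ℤ) ≤ k % d := Int.emod_nonneg k hd'.ne'
      have h1 : k % d < d := Int.emod_lt_of_pos k hd'
      have hmem : τ ^ (k % d) ∈ N := by
        have e : k % d = k - d * (k / d) := Int.emod_def k d
        rw [e, zpow_sub, zpow_mul]
        refine N.mul_mem hk (N.inv_mem (N.zpow_mem ?_ _))
        rw [zpow_natCast]; exact hτd
      rcases eq_or_lt_of_le h0 with h | h
      · exact Int.dvd_of_emod_eq_zero h.symm
      · exfalso
        have hs : τ ^ (k % d).toNat ∈ N := by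
          rwa [← zpow_natCast, Int.toNat_of_nonneg h0]
        have := hmin (k % d).toNat (by omega) hs
        omega
    -- r on powers of τ in N
    have hrpow : ∀ (k : ℤ) (h : τ ^ k ∈ N), r ⟨τ ^ k, h⟩ = g ^ k := by
      intro k h
      obtain ⟨q, hq⟩ := hdvd k h
      have e : (⟨τ ^ k, h⟩ : N) = (⟨τ ^ d, hτd⟩ : N) ^ q := by
        ext
        rw [SubgroupClass.coe_zpow]
        show τ ^ k = (τ ^ d) ^ q
        rw [← zpow_natCast τ d, ← zpow_mul, ← hq]
      rw [e, map_zpow, hpow, ← zpow_natCast g d, ← zpow_mul, ← hq]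
    -- inverse conjugation
    have hconj' : ∀ (σ : N) (h : τ⁻¹ * ↑σ * τ ∈ N),
        r ⟨τ⁻¹ * ↑σ * τ, h⟩ = g⁻¹ * r σ * g := by
      intro σ h
      have e : τ * (τ⁻¹ * ↑σ * τ) * τ⁻¹ = ↑σ := by group
      have h2 := hconj ⟨τ⁻¹ * ↑σ * τ, h⟩
      have e2 : (⟨τ * (τ⁻¹ * ↑σ * τ) * τ⁻¹, hN.conj_mem _ h τ⟩ : N) = σ :=
        Subtype.ext e
      rw [e2] at h2
      rw [h2]; group
    -- conjugation by integer powers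
    have key : ∀ (k : ℤ) (σ : N) (h : τ ^ k * ↑σ * (τ ^ k)⁻¹ ∈ N),
        r ⟨τ ^ k * ↑σ * (τ ^ k)⁻¹, h⟩ = g ^ k * r σ * (g ^ k)⁻¹ := by
      intro k
      induction k using Int.induction_on with
      | zero =>
        intro σ h
        have e : (⟨τ ^ (0:ℤ) * ↑σ * (τ ^ (0:ℤ))⁻¹, h⟩ : N) = σ := by
          ext; simp
        rw [e]; simp
      | succ n ih =>
        intro σ h
        have hm1 : τ * ↑σ * τ⁻¹ ∈ N := hN.conj_mem σ.1 σ.2 τ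
        have e : τ ^ ((n:ℤ)+1) * ↑σ * (τ ^ ((n:ℤ)+1))⁻¹
            = τ ^ (n:ℤ) * (τ * ↑σ * τ⁻¹) * (τ ^ (n:ℤ))⁻¹ := by
          rw [zpow_add_one]; group
        have h' : τ ^ (n:ℤ) * ((⟨τ * ↑σ * τ⁻¹, hm1⟩ : N) : G) * (τ ^ (n:ℤ))⁻¹ ∈ N := by
          rw [e] at h; exact h
        have e2 : (⟨τ ^ ((n:ℤ)+1) * ↑σ * (τ ^ ((n:ℤ)+1))⁻¹, h⟩ : N)
            = ⟨τ ^ (n:ℤ) * ((⟨τ * ↑σ * τ⁻¹, hm1⟩ : N) : G) * (τ ^ (n:ℤ))⁻¹, h'⟩ :=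
          Subtype.ext e
        rw [e2, ih _ h', hconj σ, zpow_add_one]
        group
      | pred n ih =>
        intro σ h
        have hm1 : τ⁻¹ * ↑σ * τ ∈ N := by
          have := hN.conj_mem σ.1 σ.2 τ⁻¹
          simpa using this
        have e : τ ^ (-(n:ℤ)-1) * ↑σ * (τ ^ (-(n:ℤ)-1))⁻¹
            = τ ^ (-(n:ℤ)) * (τ⁻¹ * ↑σ * τ) * (τ ^ (-(n:ℤ)))⁻¹ := by
          rw [zpow_sub_one]; group
        have h' : τ ^ (-(n:ℤ)) * ((⟨τ⁻¹ * ↑σ * τ, hm1⟩ : N) : G) * (τ ^ (-(n:ℤ)))⁻¹ ∈ N := by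
          rw [e] at h; exact h
        have e2 : (⟨τ ^ (-(n:ℤ)-1) * ↑σ * (τ ^ (-(n:ℤ)-1))⁻¹, h⟩ : N)
            = ⟨τ ^ (-(n:ℤ)) * ((⟨τ⁻¹ * ↑σ * τ, hm1⟩ : N) : G) * (τ ^ (-(n:ℤ)))⁻¹, h'⟩ :=
          Subtype.ext e
        rw [e2, ih _ h', hconj' σ hm1, zpow_sub_one]
        group
    choose nn hnn using hgen
    set f : G → H := fun x => g ^ nn x * r ⟨(τ ^ nn x)⁻¹ * x, hnn x⟩ with hf
    -- independence of representative
    have indep : ∀ (m : ℤ) (x : G) (h : (τ ^ m)⁻¹ * x ∈ N),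
        f x = g ^ m * r ⟨(τ ^ m)⁻¹ * x, h⟩ := by
      intro m x h
      have hk := hnn x
      set k := nn x with hkdef
      have hp : τ ^ (k - m) ∈ N := by
        have e : τ ^ (k - m) = ((τ ^ m)⁻¹ * x) * ((τ ^ k)⁻¹ * x)⁻¹ := by
          rw [zpow_sub]; group
        rw [e]; exact N.mul_mem h (N.inv_mem hk)
      have e2 : (⟨(τ ^ m)⁻¹ * x, h⟩ : N)
          = ⟨τ ^ (k - m), hp⟩ * ⟨(τ ^ k)⁻¹ * x, hk⟩ := by
        ext
        show (τ ^ m)⁻¹ * x = τ ^ (k - m) * ((τ ^ k)⁻¹ * x)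
        rw [zpow_sub]; group
      rw [e2, map_mul, hrpow (k - m) hp]
      show g ^ k * r ⟨(τ ^ k)⁻¹ * x, hk⟩ = g ^ m * (g ^ (k - m) * r ⟨(τ ^ k)⁻¹ * x, hk⟩)
      rw [← mul_assoc, ← zpow_add]
      congr 2
      omega
    have hmul : ∀ x y : G, f (x * y) = f x * f y := by
      intro x y
      set a := nn x with ha
      set b := nn y with hb
      have hx := hnn x
      have hy := hnn y
      have hcm : τ ^ (-b) * ((τ ^ a)⁻¹ * x) * (τ ^ (-b))⁻¹ ∈ N := by
        exact hN.conj_mem _ hx _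
      have hm : (τ ^ (a + b))⁻¹ * (x * y) ∈ N := by
        have e : (τ ^ (a + b))⁻¹ * (x * y)
            = (τ ^ (-b) * ((τ ^ a)⁻¹ * x) * (τ ^ (-b))⁻¹) * ((τ ^ b)⁻¹ * y) := by
          rw [zpow_add, zpow_neg]; group
        rw [e]; exact N.mul_mem hcm hy
      rw [indep (a + b) (x * y) hm]
      have e2 : (⟨(τ ^ (a + b))⁻¹ * (x * y), hm⟩ : N)
          = ⟨τ ^ (-b) * ((⟨(τ ^ a)⁻¹ * x, hx⟩ : N) : G) * (τ ^ (-b))⁻¹, hcm⟩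
            * ⟨(τ ^ b)⁻¹ * y, hy⟩ := by
        ext
        show (τ ^ (a + b))⁻¹ * (x * y)
            = (τ ^ (-b) * ((τ ^ a)⁻¹ * x) * (τ ^ (-b))⁻¹) * ((τ ^ b)⁻¹ * y)
        rw [zpow_add, zpow_neg]; group
      rw [e2, map_mul, key (-b) _ hcm]
      show g ^ (a + b) * (g ^ (-b) * r ⟨(τ ^ a)⁻¹ * x, hx⟩ * (g ^ (-b))⁻¹
            * r ⟨(τ ^ b)⁻¹ * y, hy⟩)
          = (g ^ a * r ⟨(τ ^ a)⁻¹ * x, hx⟩) * (g ^ b * r ⟨(τ ^ b)⁻¹ * y, hy⟩)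
      generalize r ⟨(τ ^ a)⁻¹ * x, hx⟩ = u
      generalize r ⟨(τ ^ b)⁻¹ * y, hy⟩ = v
      group
    refine ⟨MonoidHom.mk' f hmul, ?_, ?_⟩
    · intro σ
      have h0 : (τ ^ (0:ℤ))⁻¹ * (σ:G) ∈ N := by simp only [zpow_zero, inv_one, one_mul]; exact σ.2
      have := indep 0 σ h0
      show f ↑σ = r σ
      rw [this]
      have e : (⟨(τ ^ (0:ℤ))⁻¹ * ↑σ, h0⟩ : N) = σ := by ext; simp
      rw [e]; simp
    · intro x
      show δ (f x) = ε x
      rw [hf]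
      simp only
      rw [map_mul, map_zpow, hdg, hdet]
      show (ε τ) ^ nn x * ε ((τ ^ nn x)⁻¹ * x) = ε x
      rw [← map_zpow, ← map_mul]
      congr 1
      group
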